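/- Let q be a prime power, let d be even, write e = d/2, suppose n ≥ k ≥ d ≥ 2 and s ≥ 1. Let Q_k ⊆ F_q^{k×k} be an MRD code with minimum rank distance e and Q_n ⊆ F_q^{k×n} an MRD code with minimum rank distance e. Put S_k = Σ_{r=e}^{k−e} A_r(Q_k) and S_n = Σ_{r=e}^{k−e} A_r(Q_n). Then A_q((s+1)k + n, d, k) ≥ Σ_{j=0}^{s} q^{((s−j)k + n)(k−e+1)} · S_k^j + S_n · S_k^{s−1}. -/

import Mathlib

open Matrix

section Aux

variable {F : Type*} [Field F]

/-- The row span of a matrix. -/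
noncomputable def rowSpan {m N : Type*} (G : Matrix m N F) : Submodule F (N → F) :=
  Submodule.span F (Set.range G)

lemma finrank_rowSpan {m N : Type*} [Finite m] [Fintype N] (G : Matrix m N F) :
    Module.finrank F ↥(rowSpan G) = G.rank :=
  (G.rank_eq_finrank_span_row).symm

lemma rowSpan_map_funLeft {m N ι : Type*} (G : Matrix m N F) (c : ι → N) :
    (rowSpan G).map (LinearMap.funLeft F F c) = rowSpan (G.submatrix id c) := by
  rw [rowSpan, rowSpan, Submodule.map_span]
  congr 1
  ext v
  constructor
  · rintro ⟨_, ⟨i, rfl⟩, rfl⟩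
    exact ⟨i, rfl⟩
  · rintro ⟨i, rfl⟩
    exact ⟨_, ⟨i, rfl⟩, rfl⟩

lemma rank_submatrix_id_le {k : ℕ} {N ι : Type*} [Fintype N] [Fintype ι]
    (M : Matrix (Fin k) N F) (c : ι → N) : (M.submatrix id c).rank ≤ M.rank := by
  rw [Matrix.rank_eq_finrank_span_row, Matrix.rank_eq_finrank_span_row]
  have := Submodule.finrank_map_le (LinearMap.funLeft F F c) (rowSpan M)
  rwa [rowSpan_map_funLeft] at this

lemma rank_add_le' {m N : Type*} [Fintype N] [Fintype m] (A B : Matrix m N F) :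
    (A + B).rank ≤ A.rank + B.rank := by
  classical
  have hr : LinearMap.range (A + B).mulVecLin ≤
      LinearMap.range A.mulVecLin ⊔ LinearMap.range B.mulVecLin := by
    rintro _ ⟨x, rfl⟩
    rw [Matrix.mulVecLin_add, LinearMap.add_apply]
    exact Submodule.add_mem_sup (LinearMap.mem_range_self _ x) (LinearMap.mem_range_self _ x)
  calc (A + B).rank ≤ Module.finrank F
        ↥(LinearMap.range A.mulVecLin ⊔ LinearMap.range B.mulVecLin) :=
        Submodule.finrank_mono hr
    _ ≤ A.rank + B.rank := Submodule.finrank_add_le_finrank_add_finrank _ _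

lemma rank_neg' {k : ℕ} (M : Matrix (Fin k) (Fin k) F) : (-M).rank = M.rank := by
  classical
  have h : (-M) = M * (-1) := by rw [Matrix.mul_neg, Matrix.mul_one]
  rw [h]
  apply Matrix.rank_mul_eq_left_of_isUnit_det
  rw [Matrix.det_neg, Matrix.det_one, mul_one]
  rw [Fintype.card_fin]
  exact (isUnit_one.neg : IsUnit (-1 : F)).pow k

lemma rank_one_sub_mul {k e : ℕ} (Y Z : Matrix (Fin k) (Fin k) F) (hek : e ≤ k)
    (hY : Y.rank ≤ k - e) : e ≤ (1 - Y * Z).rank := by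
  classical
  have h1 : (1 - Y * Z) + Y * Z = 1 := by abel
  have h2 : ((1 - Y * Z) + Y * Z).rank = k := by rw [h1, Matrix.rank_one, Fintype.card_fin]
  have h3 := rank_add_le' (1 - Y * Z) (Y * Z)
  have h4 := Matrix.rank_mul_le_left Y Z
  omega

/-- Core geometric lemma: if `G` has an identity block in columns `cj`, and `K = H - X*G`
vanishes on columns `cj` but has rank at least `e` on columns `ct`, then the sum of the
row spaces of `G` and `H` has dimension at least `k + e`. -/
lemma core_dist {k e : ℕ} {N τ : Type*} [Fintype N] [Fintype τ]
    (G H : Matrix (Fin k) N F) (X : Matrix (Fin k) (Fin k) F) (cj : Fin k → N) (ct : τ → N)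
    (hG : G.submatrix id cj = 1)
    (hK0 : (H - X * G).submatrix id cj = 0)
    (hKe : e ≤ ((H - X * G).submatrix id ct).rank) :
    k + e ≤ Module.finrank F ↥(rowSpan G ⊔ rowSpan H) := by
  classical
  set K := H - X * G with hK
  set V := rowSpan G ⊔ rowSpan H with hV
  have hXG : ∀ i, (X * G) i ∈ rowSpan G := by
    intro i
    have h : (X * G) i = ∑ l, X i l • G l := by
      funext c
      simp [Matrix.mul_apply, Finset.sum_apply]
    rw [h]
    exact Submodule.sum_mem _ fun l _ =>
      Submodule.smul_mem _ _ (Submodule.subset_span ⟨l, rfl⟩)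
  have hrows : ∀ i, K i ∈ V := by
    intro i
    have h1 : H i ∈ V := le_sup_right (a := rowSpan G) (Submodule.subset_span ⟨i, rfl⟩)
    have h2 : (X * G) i ∈ V := le_sup_left (b := rowSpan H) (hXG i)
    have h3 : K i = H i - (X * G) i := rfl
    rw [h3]
    exact sub_mem h1 h2
  have hSV : rowSpan K ≤ V := Submodule.span_le.2 (by rintro _ ⟨i, rfl⟩; exact hrows i)
  set φ := LinearMap.funLeft F F cj with hφ
  have hSker : rowSpan K ≤ LinearMap.ker φ := Submodule.span_le.2 (by
    rintro _ ⟨i, rfl⟩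
    have h : φ (K i) = (K.submatrix id cj) i := rfl
    rw [SetLike.mem_coe, LinearMap.mem_ker, h, hK0]
    rfl)
  have hrn : Module.finrank F ↥(V.map φ)
      + Module.finrank F ↥(LinearMap.ker (φ.domRestrict V)) = Module.finrank F ↥V := by
    rw [← LinearMap.range_domRestrict]
    exact LinearMap.finrank_range_add_finrank_ker _
  have hmapk : k ≤ Module.finrank F ↥(V.map φ) := by
    have h1 : (rowSpan G).map φ ≤ V.map φ := Submodule.map_mono le_sup_left
    have h2 : (rowSpan G).map φ = rowSpan (1 : Matrix (Fin k) (Fin k) F) := by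
      rw [hφ, rowSpan_map_funLeft, hG]
    have h3 : Module.finrank F ↥(rowSpan (1 : Matrix (Fin k) (Fin k) F)) = k := by
      rw [finrank_rowSpan, Matrix.rank_one, Fintype.card_fin]
    have h4 := Submodule.finrank_mono (h2 ▸ h1)
    omega
  have hkere : e ≤ Module.finrank F ↥(LinearMap.ker (φ.domRestrict V)) := by
    have hrankK : e ≤ Module.finrank F ↥(rowSpan K) := by
      have h1 : ((rowSpan K).map (LinearMap.funLeft F F ct)) = rowSpan (K.submatrix id ct) :=
        rowSpan_map_funLeft K ct
      have h2 := Submodule.finrank_map_le (LinearMap.funLeft F F ct) (rowSpan K)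
      rw [h1, finrank_rowSpan] at h2
      exact hKe.trans h2
    have hfinj : Function.Injective
        (LinearMap.codRestrict (LinearMap.ker (φ.domRestrict V)) (Submodule.inclusion hSV)
          (fun c => by
            rw [LinearMap.mem_ker, LinearMap.domRestrict_apply]
            exact hSker c.2)) := by
      intro a b hab
      have h1 : Submodule.inclusion hSV a = Submodule.inclusion hSV b :=
        congrArg Subtype.val hab
      exact Submodule.inclusion_injective hSV h1
    exact hrankK.trans (LinearMap.finrank_le_finrank_of_injective hfinj)
  omega

end Aux

section MK

variable {F : Type*} [Field F] {k n s : ℕ}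

/-- Column index of entry `c` of the `j`-th `k`-block. -/
def colIdx (k n s : ℕ) (j : Fin (s + 1)) (c : Fin k) : Fin ((s + 1) * k + n) :=
  ⟨(j : ℕ) * k + c, by
    have h1 : ((j : ℕ) + 1) * k ≤ (s + 1) * k := Nat.mul_le_mul_right _ j.2
    have h2 : (j : ℕ) * k + (c : ℕ) < ((j : ℕ) + 1) * k := by
      rw [add_one_mul]; omega
    omega⟩

/-- Column index of entry `c` of the tail `n`-block. -/
def tailIdx (k n s : ℕ) (c : Fin n) : Fin ((s + 1) * k + n) :=
  ⟨(s + 1) * k + c, by have := c.2; omega⟩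

/-- Assemble a `k × ((s+1)k + n)` matrix from `s+1` square blocks and a tail block. -/
def mkM (A : Fin (s + 1) → Matrix (Fin k) (Fin k) F) (B : Matrix (Fin k) (Fin n) F) :
    Matrix (Fin k) (Fin ((s + 1) * k + n)) F :=
  Matrix.of fun i x =>
    if h : (x : ℕ) < (s + 1) * k then
      A (Fin.divNat (⟨(x : ℕ), h⟩ : Fin ((s + 1) * k))) i (Fin.modNat ⟨(x : ℕ), h⟩)
    else B i ⟨(x : ℕ) - (s + 1) * k, by have := x.2; omega⟩

lemma colIdx_lt (j : Fin (s + 1)) (c : Fin k) :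
    ((colIdx k n s j c : Fin ((s + 1) * k + n)) : ℕ) < (s + 1) * k := by
  show (j : ℕ) * k + c < (s + 1) * k
  have h1 : ((j : ℕ) + 1) * k ≤ (s + 1) * k := Nat.mul_le_mul_right _ j.2
  have h2 : (j : ℕ) * k + (c : ℕ) < ((j : ℕ) + 1) * k := by rw [add_one_mul]; omega
  omega

lemma mkM_block (A : Fin (s + 1) → Matrix (Fin k) (Fin k) F) (B : Matrix (Fin k) (Fin n) F)
    (j : Fin (s + 1)) : (mkM A B).submatrix id (colIdx k n s j) = A j := by
  ext i c
  have hk : 0 < k := by have := c.2; omega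
  have hlt := colIdx_lt (n := n) j c
  simp only [Matrix.submatrix_apply, id_eq, mkM, Matrix.of_apply, dif_pos hlt]
  have e1 : Fin.divNat (⟨((colIdx k n s j c : Fin _) : ℕ), hlt⟩ : Fin ((s + 1) * k)) = j := by
    apply Fin.ext
    show ((j : ℕ) * k + c) / k = j
    rw [add_comm, Nat.add_mul_div_right _ _ hk, Nat.div_eq_of_lt c.2, zero_add]
  have e2 : Fin.modNat (⟨((colIdx k n s j c : Fin _) : ℕ), hlt⟩ : Fin ((s + 1) * k)) = c := by
    apply Fin.ext
    show ((j : ℕ) * k + c) % k = c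
    rw [add_comm, Nat.add_mul_mod_self_right, Nat.mod_eq_of_lt c.2]
  rw [e1, e2]

lemma mkM_tail (A : Fin (s + 1) → Matrix (Fin k) (Fin k) F) (B : Matrix (Fin k) (Fin n) F) :
    (mkM A B).submatrix id (tailIdx k n s) = B := by
  ext i c
  have hge : ¬ ((tailIdx k n s c : Fin ((s + 1) * k + n)) : ℕ) < (s + 1) * k := by
    show ¬ ((s + 1) * k + (c : ℕ) < (s + 1) * k); omega
  simp only [Matrix.submatrix_apply, id_eq, mkM, Matrix.of_apply, dif_neg hge]
  congr 1
  apply Fin.ext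
  show ((s + 1) * k + (c : ℕ)) - (s + 1) * k = c
  omega

lemma mkM_sub_mul (A A' : Fin (s + 1) → Matrix (Fin k) (Fin k) F)
    (B B' : Matrix (Fin k) (Fin n) F) (X : Matrix (Fin k) (Fin k) F) :
    mkM A' B' - X * mkM A B = mkM (fun i => A' i - X * A i) (B' - X * B) := by
  ext i x
  simp only [Matrix.sub_apply, Matrix.mul_apply, mkM, Matrix.of_apply]
  by_cases h : (x : ℕ) < (s + 1) * k
  · simp only [dif_pos h, Matrix.sub_apply, Matrix.mul_apply]
  · simp only [dif_neg h, Matrix.sub_apply, Matrix.mul_apply]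

end MK

section Dist

variable {F : Type*} [Field F] {k n s e : ℕ}

lemma dist_cross (A A' : Fin (s + 1) → Matrix (Fin k) (Fin k) F)
    (B B' : Matrix (Fin k) (Fin n) F) (j j' : Fin (s + 1))
    (h1 : A j = 1) (h1' : A' j' = 1) (hsm : (A' j).rank ≤ k - e) (hek : e ≤ k) :
    k + e ≤ Module.finrank F ↥(rowSpan (mkM A B) ⊔ rowSpan (mkM A' B')) := by
  apply core_dist (mkM A B) (mkM A' B') (A' j) (colIdx k n s j) (colIdx k n s j')
  · rw [mkM_block, h1]
  · rw [mkM_sub_mul, mkM_block, h1, Matrix.mul_one, sub_self]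
  · rw [mkM_sub_mul, mkM_block, h1']
    exact rank_one_sub_mul _ _ hek hsm

lemma dist_same_block (A A' : Fin (s + 1) → Matrix (Fin k) (Fin k) F)
    (B B' : Matrix (Fin k) (Fin n) F) (j t : Fin (s + 1))
    (h1 : A j = 1) (h1' : A' j = 1) (ht : e ≤ (A' t - A t).rank) :
    k + e ≤ Module.finrank F ↥(rowSpan (mkM A B) ⊔ rowSpan (mkM A' B')) := by
  apply core_dist (mkM A B) (mkM A' B') 1 (colIdx k n s j) (colIdx k n s t)
  · rw [mkM_block, h1]
  · rw [mkM_sub_mul, mkM_block, h1, h1', Matrix.one_mul, sub_self]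
  · rw [mkM_sub_mul, mkM_block, Matrix.one_mul]
    exact ht

lemma dist_same_tail (A A' : Fin (s + 1) → Matrix (Fin k) (Fin k) F)
    (B B' : Matrix (Fin k) (Fin n) F) (j : Fin (s + 1))
    (h1 : A j = 1) (h1' : A' j = 1) (ht : e ≤ (B' - B).rank) :
    k + e ≤ Module.finrank F ↥(rowSpan (mkM A B) ⊔ rowSpan (mkM A' B')) := by
  apply core_dist (mkM A B) (mkM A' B') 1 (colIdx k n s j) (tailIdx k n s)
  · rw [mkM_block, h1]
  · rw [mkM_sub_mul, mkM_block, h1, h1', Matrix.one_mul, sub_self]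
  · rw [mkM_sub_mul, mkM_tail, Matrix.one_mul]
    exact ht

lemma finrank_rowSpan_mkM (A : Fin (s + 1) → Matrix (Fin k) (Fin k) F)
    (B : Matrix (Fin k) (Fin n) F) (j : Fin (s + 1)) (h1 : A j = 1) :
    Module.finrank F ↥(rowSpan (mkM A B)) = k := by
  classical
  rw [finrank_rowSpan]
  refine le_antisymm ?_ ?_
  · exact (mkM A B).rank_le_card_height.trans (by rw [Fintype.card_fin])
  · have h2 := rank_submatrix_id_le (mkM A B) (colIdx k n s j)
    rw [mkM_block, h1, Matrix.rank_one, Fintype.card_fin] at h2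
    exact h2

end Dist

/-- The subspace distance `d_S(U, W) = dim(U + W) - dim(U ∩ W)`. -/
noncomputable def sDist {F : Type*} [Field F] {N : ℕ} (U W : Submodule F (Fin N → F)) : ℕ :=
  Module.finrank F ↥(U ⊔ W) - Module.finrank F ↥(U ⊓ W)

/-- `A_q(N, d, k)`: the maximum size of a constant dimension code of `k`-dimensional
subspaces of `F^N` with pairwise subspace distances at least `d`. -/
noncomputable def Aq (F : Type*) [Field F] (N d k : ℕ) : ℕ :=
  sSup {M : ℕ | ∃ C : Set (Submodule F (Fin N → F)), C.Finite ∧ C.ncard = M ∧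
    (∀ U ∈ C, Module.finrank F ↥U = k) ∧
    (∀ U ∈ C, ∀ W ∈ C, U ≠ W → d ≤ sDist U W)}

theorem stmt12 (q k n d e s : ℕ) (hq : IsPrimePow q) (hde : d = 2 * e) (hd2 : 2 ≤ d)
    (hdk : d ≤ k) (hkn : k ≤ n) (hs : 1 ≤ s)
    (F : Type*) [Field F] [Fintype F] (hF : Fintype.card F = q)
    (Qk : Finset (Matrix (Fin k) (Fin k) F)) (Qn : Finset (Matrix (Fin k) (Fin n) F))
    (hQkcard : Qk.card = q ^ (k * (k - e + 1)))
    (hQk : ∀ A ∈ Qk, ∀ B ∈ Qk, A ≠ B → e ≤ (A - B).rank)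
    (hQncard : Qn.card = q ^ (n * (k - e + 1)))
    (hQn : ∀ A ∈ Qn, ∀ B ∈ Qn, A ≠ B → e ≤ (A - B).rank) :
    (∑ j ∈ Finset.range (s + 1),
        q ^ (((s - j) * k + n) * (k - e + 1)) *
          (∑ r ∈ Finset.Icc e (k - e), (Qk.filter (fun X => X.rank = r)).card) ^ j)
      + (∑ r ∈ Finset.Icc e (k - e), (Qn.filter (fun X => X.rank = r)).card) *
          (∑ r ∈ Finset.Icc e (k - e), (Qk.filter (fun X => X.rank = r)).card) ^ (s - 1)
      ≤ Aq F ((s + 1) * k + n) d k := by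
  classical
  have he1 : 1 ≤ e := by omega
  have hek : e ≤ k := by omega
  have hk2 : 2 ≤ k := by omega
  set Sk := ∑ r ∈ Finset.Icc e (k - e), (Qk.filter (fun X => X.rank = r)).card with hSkdef
  set Sn := ∑ r ∈ Finset.Icc e (k - e), (Qn.filter (fun X => X.rank = r)).card with hSndef
  set QkM : Finset (Matrix (Fin k) (Fin k) F) :=
    Qk.filter (fun X => e ≤ X.rank ∧ X.rank ≤ k - e) with hQkMdef
  set QnM : Finset (Matrix (Fin k) (Fin n) F) :=
    Qn.filter (fun X => e ≤ X.rank ∧ X.rank ≤ k - e) with hQnMdef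
  have hQkM : QkM.card = Sk := by
    rw [hSkdef]
    rw [Finset.card_eq_sum_card_fiberwise (f := fun X => X.rank) (t := Finset.Icc e (k - e))
      (fun X hX => by
        rw [hQkMdef] at hX
        have := (Finset.mem_filter.1 hX).2
        exact Finset.mem_Icc.2 ⟨this.1, this.2⟩)]
    refine Finset.sum_congr rfl fun r hr => ?_
    congr 1
    rcases Finset.mem_Icc.1 hr with ⟨hr1, hr2⟩
    ext X
    simp only [hQkMdef, Finset.mem_filter]
    constructor
    · rintro ⟨⟨h1, h2, h3⟩, h4⟩; exact ⟨h1, h4⟩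
    · rintro ⟨h1, h2⟩; exact ⟨⟨h1, by omega, by omega⟩, h2⟩
  have hQnM : QnM.card = Sn := by
    rw [hSndef]
    rw [Finset.card_eq_sum_card_fiberwise (f := fun X => X.rank) (t := Finset.Icc e (k - e))
      (fun X hX => by
        rw [hQnMdef] at hX
        have := (Finset.mem_filter.1 hX).2
        exact Finset.mem_Icc.2 ⟨this.1, this.2⟩)]
    refine Finset.sum_congr rfl fun r hr => ?_
    congr 1
    rcases Finset.mem_Icc.1 hr with ⟨hr1, hr2⟩
    ext X
    simp only [hQnMdef, Finset.mem_filter]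
    constructor
    · rintro ⟨⟨h1, h2, h3⟩, h4⟩; exact ⟨h1, h4⟩
    · rintro ⟨h1, h2⟩; exact ⟨⟨h1, by omega, by omega⟩, h2⟩
  have hQkMsub : QkM ⊆ Qk := Finset.filter_subset _ _
  have hQnMsub : QnM ⊆ Qn := Finset.filter_subset _ _
  have hQkMrank : ∀ X ∈ QkM, e ≤ X.rank ∧ X.rank ≤ k - e :=
    fun X hX => (Finset.mem_filter.1 hX).2
  have hQnMrank : ∀ X ∈ QnM, e ≤ X.rank ∧ X.rank ≤ k - e :=
    fun X hX => (Finset.mem_filter.1 hX).2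
  have hblockQk : ∀ X Y : Matrix (Fin k) (Fin k) F, X ∈ Qk → Y ∈ Qk →
      X = Y ∨ e ≤ (Y - X).rank := by
    intro X Y hX hY
    by_cases h : X = Y
    · exact Or.inl h
    · exact Or.inr (hQk Y hY X hX (Ne.symm h))
  have hblockQn : ∀ X Y : Matrix (Fin k) (Fin n) F, X ∈ Qn → Y ∈ Qn →
      X = Y ∨ e ≤ (Y - X).rank := by
    intro X Y hX hY
    by_cases h : X = Y
    · exact Or.inl h
    · exact Or.inr (hQn Y hY X hX (Ne.symm h))
  set famF : ℕ → ℕ → Finset (Matrix (Fin k) (Fin k) F) := fun j m =>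
    if m < j then QkM else if m = j then {1} else Qk with hfamF
  set exF : ℕ → Finset (Matrix (Fin k) (Fin k) F) := fun m =>
    if m < s - 1 then QkM else if m = s - 1 then {0} else {1} with hexF
  set Pj : ℕ → Finset ((Fin (s + 1) → Matrix (Fin k) (Fin k) F) × Matrix (Fin k) (Fin n) F) :=
    fun j => (Fintype.piFinset fun i : Fin (s + 1) => famF j (i : ℕ)) ×ˢ Qn with hPjdef
  set Pex : Finset ((Fin (s + 1) → Matrix (Fin k) (Fin k) F) × Matrix (Fin k) (Fin n) F) :=
    (Fintype.piFinset fun i : Fin (s + 1) => exF (i : ℕ)) ×ˢ QnM with hPexdef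
  set PT := ((Finset.range (s + 1)).biUnion Pj) ∪ Pex with hPTdef
  set f : ((Fin (s + 1) → Matrix (Fin k) (Fin k) F) × Matrix (Fin k) (Fin n) F) →
      Submodule F (Fin ((s + 1) * k + n) → F) := fun p => rowSpan (mkM p.1 p.2) with hfdef
  -- membership facts
  have hmemPj : ∀ j, ∀ p ∈ Pj j,
      (∀ i : Fin (s + 1), ((i : ℕ) < j → p.1 i ∈ QkM) ∧ ((i : ℕ) = j → p.1 i = 1) ∧
        (j < (i : ℕ) → p.1 i ∈ Qk)) ∧ p.2 ∈ Qn := by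
    intro j p hp
    rw [hPjdef] at hp
    rw [Finset.mem_product, Fintype.mem_piFinset] at hp
    obtain ⟨hp1, hp2⟩ := hp
    refine ⟨fun i => ⟨?_, ?_, ?_⟩, hp2⟩
    · intro h; have hi := hp1 i; simp only [hfamF] at hi; rwa [if_pos h] at hi
    · intro h; have hi := hp1 i; simp only [hfamF] at hi
      rw [if_neg (by omega), if_pos h] at hi
      exact Finset.mem_singleton.1 hi
    · intro h; have hi := hp1 i; simp only [hfamF] at hi
      rwa [if_neg (by omega), if_neg (by omega)] at hi
  have hmemPex : ∀ p ∈ Pex,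
      (∀ i : Fin (s + 1), ((i : ℕ) < s - 1 → p.1 i ∈ QkM) ∧ ((i : ℕ) = s - 1 → p.1 i = 0) ∧
        ((i : ℕ) = s → p.1 i = 1)) ∧ p.2 ∈ QnM := by
    intro p hp
    rw [hPexdef] at hp
    rw [Finset.mem_product, Fintype.mem_piFinset] at hp
    obtain ⟨hp1, hp2⟩ := hp
    refine ⟨fun i => ⟨?_, ?_, ?_⟩, hp2⟩
    · intro h; have hi := hp1 i; simp only [hexF] at hi; rwa [if_pos h] at hi
    · intro h; have hi := hp1 i; simp only [hexF] at hi
      rw [if_neg (by omega), if_pos h] at hi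
      exact Finset.mem_singleton.1 hi
    · intro h; have hi := hp1 i; simp only [hexF] at hi
      rw [if_neg (by omega), if_neg (by omega)] at hi
      exact Finset.mem_singleton.1 hi
  -- same-pivot pair bound
  have pairSame : ∀ (A A' : Fin (s + 1) → Matrix (Fin k) (Fin k) F)
      (B B' : Matrix (Fin k) (Fin n) F) (j : Fin (s + 1)), A j = 1 → A' j = 1 →
      (∀ i : Fin (s + 1), i ≠ j → A i = A' i ∨ e ≤ (A' i - A i).rank) →
      (B = B' ∨ e ≤ (B' - B).rank) → (A, B) ≠ (A', B') →
      k + e ≤ Module.finrank F ↥(f (A, B) ⊔ f (A', B')) := by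
    intro A A' B B' j h1 h1' hblocks htail hne
    by_cases hAA : A = A'
    · subst hAA
      have hBB : B ≠ B' := fun h => hne (by rw [h])
      rcases htail with h | h
      · exact absurd h hBB
      · exact dist_same_tail A A B B' j h1 h1 h
    · obtain ⟨t, ht⟩ := Function.ne_iff.1 hAA
      have htj : t ≠ j := fun h => ht (by rw [h, h1, h1'])
      rcases hblocks t htj with h | h
      · exact absurd h ht
      · exact dist_same_block A A' B B' j t h1 h1' h
  have cross : ∀ (p p' : (Fin (s + 1) → Matrix (Fin k) (Fin k) F) × Matrix (Fin k) (Fin n) F)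
      (j j' : Fin (s + 1)), p.1 j = 1 → p'.1 j' = 1 → (p'.1 j).rank ≤ k - e →
      k + e ≤ Module.finrank F ↥(f p ⊔ f p') := by
    intro p p' j j' h1 h1' hsm
    exact dist_cross p.1 p'.1 p.2 p'.2 j j' h1 h1' hsm hek
  have hmem : ∀ p ∈ PT, (∃ j ≤ s, p ∈ Pj j) ∨ p ∈ Pex := by
    intro p hp
    rw [hPTdef] at hp
    rcases Finset.mem_union.1 hp with h | h
    · obtain ⟨j, hj, hpj⟩ := Finset.mem_biUnion.1 h
      exact Or.inl ⟨j, by have := Finset.mem_range.1 hj; omega, hpj⟩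
    · exact Or.inr h
  -- the key distance bound
  have key : ∀ p ∈ PT, ∀ p' ∈ PT, p ≠ p' →
      k + e ≤ Module.finrank F ↥(f p ⊔ f p') := by
    intro p hp p' hp' hne
    rcases hmem p hp with ⟨j, hj, hpj⟩ | hpe <;> rcases hmem p' hp' with ⟨j', hj', hpj'⟩ | hpe'
    · obtain ⟨hfax, hBx⟩ := hmemPj j p hpj
      obtain ⟨hfax', hBx'⟩ := hmemPj j' p' hpj'
      rcases lt_trichotomy j j' with hlt | heq | hgt
      · refine cross p p' ⟨j, by omega⟩ ⟨j', by omega⟩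
          ((hfax ⟨j, by omega⟩).2.1 rfl) ((hfax' ⟨j', by omega⟩).2.1 rfl) ?_
        exact (hQkMrank _ ((hfax' ⟨j, by omega⟩).1 hlt)).2
      · subst heq
        refine pairSame p.1 p'.1 p.2 p'.2 ⟨j, by omega⟩
          ((hfax ⟨j, by omega⟩).2.1 rfl) ((hfax' ⟨j, by omega⟩).2.1 rfl) ?_
          (hblockQn _ _ hBx hBx') hne
        intro i hij
        have hiv : (i : ℕ) ≠ j := fun h => hij (Fin.ext h)
        have h1 : p.1 i ∈ Qk := by
          rcases Nat.lt_or_ge (i : ℕ) j with h | h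
          · exact hQkMsub ((hfax i).1 h)
          · exact (hfax i).2.2 (by omega)
        have h2 : p'.1 i ∈ Qk := by
          rcases Nat.lt_or_ge (i : ℕ) j with h | h
          · exact hQkMsub ((hfax' i).1 h)
          · exact (hfax' i).2.2 (by omega)
        exact hblockQk _ _ h1 h2
      · rw [sup_comm]
        refine cross p' p ⟨j', by omega⟩ ⟨j, by omega⟩
          ((hfax' ⟨j', by omega⟩).2.1 rfl) ((hfax ⟨j, by omega⟩).2.1 rfl) ?_
        exact (hQkMrank _ ((hfax ⟨j', by omega⟩).1 hgt)).2
    · -- p regular, p' extra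
      obtain ⟨hfax, hBx⟩ := hmemPj j p hpj
      obtain ⟨hexx', hBx'⟩ := hmemPex p' hpe'
      rcases Nat.lt_or_ge j s with hjs | hjs
      · refine cross p p' ⟨j, by omega⟩ ⟨s, by omega⟩
          ((hfax ⟨j, by omega⟩).2.1 rfl) ((hexx' ⟨s, by omega⟩).2.2 rfl) ?_
        rcases Nat.lt_or_ge j (s - 1) with h | h
        · exact (hQkMrank _ ((hexx' ⟨j, by omega⟩).1 h)).2
        · have hj1 : (j : ℕ) = s - 1 := by omega
          rw [(hexx' ⟨j, by omega⟩).2.1 hj1, Matrix.rank_zero]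
          omega
      · refine pairSame p.1 p'.1 p.2 p'.2 ⟨j, by omega⟩
          ((hfax ⟨j, by omega⟩).2.1 rfl) ((hexx' ⟨j, by omega⟩).2.2 (by show j = s; omega)) ?_
          (hblockQn _ _ hBx (hQnMsub hBx')) hne
        intro i hij
        have hiv : (i : ℕ) < s := by
          have h2 := i.2
          have h3 : (i : ℕ) ≠ j := fun h => hij (Fin.ext h)
          omega
        have h1 : p.1 i ∈ QkM := (hfax i).1 (by omega)
        rcases Nat.lt_or_ge (i : ℕ) (s - 1) with h | h
        · exact hblockQk _ _ (hQkMsub h1) (hQkMsub ((hexx' i).1 h))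
        · have hi1 : (i : ℕ) = s - 1 := by omega
          refine Or.inr ?_
          rw [(hexx' i).2.1 hi1, zero_sub, rank_neg']
          exact (hQkMrank _ h1).1
    · -- p extra, p' regular
      obtain ⟨hexx, hBx⟩ := hmemPex p hpe
      obtain ⟨hfax', hBx'⟩ := hmemPj j' p' hpj'
      rcases Nat.lt_or_ge j' s with hjs | hjs
      · rw [sup_comm]
        refine cross p' p ⟨j', by omega⟩ ⟨s, by omega⟩
          ((hfax' ⟨j', by omega⟩).2.1 rfl) ((hexx ⟨s, by omega⟩).2.2 rfl) ?_
        rcases Nat.lt_or_ge j' (s - 1) with h | h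
        · exact (hQkMrank _ ((hexx ⟨j', by omega⟩).1 h)).2
        · have hj1 : (j' : ℕ) = s - 1 := by omega
          rw [(hexx ⟨j', by omega⟩).2.1 hj1, Matrix.rank_zero]
          omega
      · refine pairSame p.1 p'.1 p.2 p'.2 ⟨j', by omega⟩
          ((hexx ⟨j', by omega⟩).2.2 (by show j' = s; omega)) ((hfax' ⟨j', by omega⟩).2.1 rfl) ?_
          (hblockQn _ _ (hQnMsub hBx) hBx') hne
        intro i hij
        have hiv : (i : ℕ) < s := by
          have h2 := i.2
          have h3 : (i : ℕ) ≠ j' := fun h => hij (Fin.ext h)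
          omega
        have h1' : p'.1 i ∈ QkM := (hfax' i).1 (by omega)
        rcases Nat.lt_or_ge (i : ℕ) (s - 1) with h | h
        · exact hblockQk _ _ (hQkMsub ((hexx i).1 h)) (hQkMsub h1')
        · have hi1 : (i : ℕ) = s - 1 := by omega
          refine Or.inr ?_
          rw [(hexx i).2.1 hi1, sub_zero]
          exact (hQkMrank _ h1').1
    · -- both extra
      obtain ⟨hexx, hBx⟩ := hmemPex p hpe
      obtain ⟨hexx', hBx'⟩ := hmemPex p' hpe'
      refine pairSame p.1 p'.1 p.2 p'.2 ⟨s, by omega⟩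
        ((hexx ⟨s, by omega⟩).2.2 rfl) ((hexx' ⟨s, by omega⟩).2.2 rfl) ?_
        (hblockQn _ _ (hQnMsub hBx) (hQnMsub hBx')) hne
      intro i hij
      have hiv : (i : ℕ) < s := by
        have h2 := i.2
        have h3 : (i : ℕ) ≠ s := fun h => hij (Fin.ext h)
        omega
      rcases Nat.lt_or_ge (i : ℕ) (s - 1) with h | h
      · exact hblockQk _ _ (hQkMsub ((hexx i).1 h)) (hQkMsub ((hexx' i).1 h))
      · have hi1 : (i : ℕ) = s - 1 := by omega
        exact Or.inl (by rw [(hexx i).2.1 hi1, (hexx' i).2.1 hi1])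
  -- dimensions
  have hdim : ∀ p ∈ PT, Module.finrank F ↥(f p) = k := by
    intro p hp
    rcases hmem p hp with ⟨j, hj, hpj⟩ | hpe
    · exact finrank_rowSpan_mkM p.1 p.2 ⟨j, by omega⟩
        (((hmemPj j p hpj).1 ⟨j, by omega⟩).2.1 rfl)
    · exact finrank_rowSpan_mkM p.1 p.2 ⟨s, by omega⟩
        (((hmemPex p hpe).1 ⟨s, by omega⟩).2.2 rfl)
  -- helpers for disjointness
  have contra1 : ∀ X : Matrix (Fin k) (Fin k) F, X = 1 → X ∈ QkM → False := by
    intro X h1 h2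
    have h3 := (hQkMrank X h2).2
    rw [h1, Matrix.rank_one, Fintype.card_fin] at h3
    omega
  have contra2 : (1 : Matrix (Fin k) (Fin k) F) ≠ 0 := by
    intro h
    have h2 := congrArg Matrix.rank h
    rw [Matrix.rank_one, Matrix.rank_zero, Fintype.card_fin] at h2
    omega
  have contra3 : ∀ X : Matrix (Fin k) (Fin k) F, X = 0 → X ∈ QkM → False := by
    intro X h1 h2
    have h3 := (hQkMrank X h2).1
    rw [h1, Matrix.rank_zero] at h3
    omega
  have hdisjPj : ∀ j1 ∈ Finset.range (s + 1), ∀ j2 ∈ Finset.range (s + 1), j1 ≠ j2 →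
      Disjoint (Pj j1) (Pj j2) := by
    intro j1 hj1 j2 hj2 hne12
    have hj1' := Finset.mem_range.1 hj1
    have hj2' := Finset.mem_range.1 hj2
    rw [Finset.disjoint_left]
    intro p hp1 hp2
    rcases lt_or_gt_of_ne hne12 with h | h
    · exact contra1 _ (((hmemPj j1 p hp1).1 ⟨j1, by omega⟩).2.1 rfl)
        (((hmemPj j2 p hp2).1 ⟨j1, by omega⟩).1 h)
    · exact contra1 _ (((hmemPj j2 p hp2).1 ⟨j2, by omega⟩).2.1 rfl)
        (((hmemPj j1 p hp1).1 ⟨j2, by omega⟩).1 h)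
  have hdisjU : Disjoint ((Finset.range (s + 1)).biUnion Pj) Pex := by
    rw [Finset.disjoint_left]
    intro p hp1 hp2
    obtain ⟨j, hj, hpj⟩ := Finset.mem_biUnion.1 hp1
    have hj' := Finset.mem_range.1 hj
    obtain ⟨hfax, hBx⟩ := hmemPj j p hpj
    obtain ⟨hexx, hBx'⟩ := hmemPex p hp2
    rcases Nat.lt_or_ge j s with hjs | hjs
    · rcases Nat.lt_or_ge j (s - 1) with h | h
      · exact contra1 _ ((hfax ⟨j, by omega⟩).2.1 rfl) ((hexx ⟨j, by omega⟩).1 h)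
      · have hj1 : (j : ℕ) = s - 1 := by omega
        exact contra2 (by
          rw [← (hfax ⟨j, by omega⟩).2.1 rfl, (hexx ⟨j, by omega⟩).2.1 hj1])
    · exact contra3 _ ((hexx ⟨s - 1, by omega⟩).2.1 (by show s - 1 = s - 1; rfl))
        ((hfax ⟨s - 1, by omega⟩).1 (by show s - 1 < j; omega))
  -- cardinalities
  have hcardPj : ∀ j ≤ s, (Pj j).card = Sk ^ j * Qk.card ^ (s - j) * Qn.card := by
    intro j hj
    rw [hPjdef]
    simp only []
    rw [Finset.card_product, Fintype.card_piFinset]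
    congr 1
    rw [Fin.prod_univ_eq_prod_range (fun m => (famF j m).card) (s + 1)]
    rw [← Finset.prod_range_mul_prod_Ico _ (show j ≤ s + 1 by omega)]
    have hA : ∏ m ∈ Finset.range j, (famF j m).card = Sk ^ j := by
      calc ∏ m ∈ Finset.range j, (famF j m).card = ∏ _m ∈ Finset.range j, Sk :=
          Finset.prod_congr rfl (fun m hm => by
            simp only [hfamF]
            rw [if_pos (Finset.mem_range.1 hm)]
            exact hQkM)
        _ = Sk ^ j := by rw [Finset.prod_const, Finset.card_range]
    have hB : ∏ m ∈ Finset.Ico j (s + 1), (famF j m).card = Qk.card ^ (s - j) := by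
      rw [Finset.prod_eq_prod_Ico_succ_bot (show j < s + 1 by omega)]
      have h0 : (famF j j).card = 1 := by simp [hfamF]
      rw [h0, one_mul]
      calc ∏ m ∈ Finset.Ico (j + 1) (s + 1), (famF j m).card
          = ∏ _m ∈ Finset.Ico (j + 1) (s + 1), Qk.card :=
          Finset.prod_congr rfl (fun m hm => by
            rcases Finset.mem_Ico.1 hm with ⟨h1, h2⟩
            simp only [hfamF]
            rw [if_neg (by omega), if_neg (by omega)])
        _ = Qk.card ^ (s - j) := by
            rw [Finset.prod_const, Nat.card_Ico]
            congr 1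
            omega
    rw [hA, hB]
  have hcardPex : Pex.card = Sk ^ (s - 1) * Sn := by
    rw [hPexdef]
    rw [Finset.card_product, Fintype.card_piFinset, hQnM]
    congr 1
    rw [Fin.prod_univ_eq_prod_range (fun m => (exF m).card) (s + 1)]
    rw [← Finset.prod_range_mul_prod_Ico _ (show s - 1 ≤ s + 1 by omega)]
    have hA : ∏ m ∈ Finset.range (s - 1), (exF m).card = Sk ^ (s - 1) := by
      calc ∏ m ∈ Finset.range (s - 1), (exF m).card = ∏ _m ∈ Finset.range (s - 1), Sk :=
          Finset.prod_congr rfl (fun m hm => by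
            simp only [hexF]
            rw [if_pos (Finset.mem_range.1 hm)]
            exact hQkM)
        _ = Sk ^ (s - 1) := by rw [Finset.prod_const, Finset.card_range]
    have hB : ∏ m ∈ Finset.Ico (s - 1) (s + 1), (exF m).card = 1 := by
      rw [Finset.prod_eq_prod_Ico_succ_bot (show s - 1 < s + 1 by omega)]
      have h0 : (exF (s - 1)).card = 1 := by simp [hexF]
      have hss : s - 1 + 1 = s := by omega
      rw [h0, one_mul, hss, Finset.prod_eq_prod_Ico_succ_bot (show s < s + 1 by omega)]
      have h1 : (exF s).card = 1 := by
        simp only [hexF]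
        rw [if_neg (by omega), if_neg (by omega)]
        exact Finset.card_singleton _
      rw [h1, one_mul, Finset.Ico_self, Finset.prod_empty]
    rw [hA, hB, mul_one]
  have hPTcard : PT.card = (∑ j ∈ Finset.range (s + 1), (Pj j).card) + Pex.card := by
    rw [hPTdef, Finset.card_union_of_disjoint hdisjU, Finset.card_biUnion hdisjPj]
  -- injectivity
  have hinj : Set.InjOn f ↑PT := by
    intro p hp p' hp' hfe
    by_contra hne
    have h1 := key p (Finset.mem_coe.1 hp) p' (Finset.mem_coe.1 hp') hne
    rw [hfe, sup_idem] at h1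
    have h2 := hdim p' (Finset.mem_coe.1 hp')
    omega
  have hcard : (PT.image f).card =
      (∑ j ∈ Finset.range (s + 1),
        q ^ (((s - j) * k + n) * (k - e + 1)) * Sk ^ j) + Sn * Sk ^ (s - 1) := by
    rw [Finset.card_image_of_injOn hinj, hPTcard]
    congr 1
    · refine Finset.sum_congr rfl fun j hj => ?_
      have hj' : j ≤ s := by have := Finset.mem_range.1 hj; omega
      rw [hcardPj j hj', hQkcard, hQncard, ← pow_mul, mul_assoc, ← pow_add, mul_comm]
      congr 1
      ring
    · rw [hcardPex, mul_comm]
  -- conclusion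
  rw [Aq]
  have hbdd : BddAbove {M : ℕ | ∃ C : Set (Submodule F (Fin ((s + 1) * k + n) → F)),
      C.Finite ∧ C.ncard = M ∧
      (∀ U ∈ C, Module.finrank F ↥U = k) ∧
      (∀ U ∈ C, ∀ W ∈ C, U ≠ W → d ≤ sDist U W)} := by
    haveI : Finite (Submodule F (Fin ((s + 1) * k + n) → F)) :=
      Finite.of_injective (fun p => (p : Set (Fin ((s + 1) * k + n) → F)))
        SetLike.coe_injective
    refine ⟨Nat.card (Submodule F (Fin ((s + 1) * k + n) → F)), ?_⟩
    rintro M ⟨C, hCfin, rfl, -, -⟩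
    calc C.ncard ≤ (Set.univ : Set (Submodule F (Fin ((s + 1) * k + n) → F))).ncard :=
        Set.ncard_le_ncard (Set.subset_univ C) Set.finite_univ
      _ = Nat.card _ := Set.ncard_univ _
  refine le_csSup hbdd ?_
  refine ⟨↑(PT.image f), Finset.finite_toSet _, ?_, ?_, ?_⟩
  · rw [Set.ncard_coe_finset, hcard]
  · intro U hU
    obtain ⟨p, hp, rfl⟩ := Finset.mem_image.1 (Finset.mem_coe.1 hU)
    exact hdim p hp
  · intro U hU W hW hUW
    obtain ⟨p, hp, rfl⟩ := Finset.mem_image.1 (Finset.mem_coe.1 hU)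
    obtain ⟨p', hp', rfl⟩ := Finset.mem_image.1 (Finset.mem_coe.1 hW)
    have hpp : p ≠ p' := fun h => hUW (by rw [h])
    have h1 := key p hp p' hp' hpp
    have h2 := hdim p hp
    have h3 := hdim p' hp'
    have h4 := Submodule.finrank_sup_add_finrank_inf_eq (f p) (f p')
    simp only [sDist]
    omega
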